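/- Let $p$ be an odd prime power, $\delta$ a generator of the group of nonzero squares of $\mathbb{F}_p$, and $(f_0,\dots,f_{p-1}) = (0,\delta,\delta,\delta^2,\delta^2,\ldots,\delta^{(p-1)/2},\delta^{(p-1)/2})$, with second coordinates $(\phi_0,\dots,\phi_{p-1}) = (0,y_1,-y_1,\ldots,y_{(p-1)/2},-y_{(p-1)/2})$ where $y_i \in \mathbb{F}_q^*$ and $q$ is an odd prime power. Then for each nonzero $h \in \mathbb{F}_p$, the multiset $T_h = [\phi_a - \phi_b : f_a - f_b = h, a \neq b]$ is invariant under negation (i.e., $T_h = \{1,-1\} \cdot D_h$ for some multiset $D_h$ of size $(p-1)/2$), each entry of $D_h$ has the form $y_i - y_j$, $y_i + y_j$, or $y_i$, and $T_h = T_{-h}$. -/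

import Mathlib

open scoped Classical

/-- The multiset `[φ a - φ b : f a - f b = h, a ≠ b]` of second-coordinate differences
taken over ordered pairs of distinct positions whose first-coordinate difference is `h`. -/
def Tdiff {ι Fp Fq : Type*} [Fintype ι] [DecidableEq ι] [AddCommGroup Fp] [DecidableEq Fp]
    [AddCommGroup Fq] (f : ι → Fp) (φ : ι → Fq) (h : Fp) : Multiset Fq :=
  ((Finset.univ.offDiag : Finset (ι × ι)).filter fun p => f p.1 - f p.2 = h).val.map
    fun p => φ p.1 - φ p.2

/-- The first-type Paley sequence `(0, δ, δ, δ², δ², …, δ^m, δ^m)` with `m = (p-1)/2`: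
position `none` carries `0` and position `(i,t)` carries `δ^(i+1)`. -/
def paley1fst' {Fp : Type*} [Field Fp] (δ : Fp) (m : ℕ) : Option (Fin m × Fin 2) → Fp
  | none => 0
  | some (i, _) => δ ^ ((i : ℕ) + 1)

/-- The corresponding second coordinates `(0, y₁, -y₁, …, y_m, -y_m)`. -/
def paley1snd' {Fq : Type*} [Field Fq] {m : ℕ} (y : Fin m → Fq) :
    Option (Fin m × Fin 2) → Fq
  | none => 0
  | some (i, t) => (if (t : ℕ) = 0 then 1 else -1) * y i

open Finset

/-- Index involution swapping the two copies of each `δ`-power. -/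
def psig {m : ℕ} : Option (Fin m × Fin 2) → Option (Fin m × Fin 2)
  | none => none
  | some (i, t) => some (i, 1 - t)

lemma psig_psig {m : ℕ} (a : Option (Fin m × Fin 2)) : psig (psig a) = a := by
  rcases a with _ | ⟨i, t⟩
  · rfl
  · have ht : (1 : Fin 2) - (1 - t) = t := by revert t; decide
    simp [psig, ht]

lemma psig_inj {m : ℕ} : Function.Injective (psig (m := m)) :=
  Function.Involutive.injective psig_psig

lemma fst_psig {Fp : Type*} [Field Fp] (δ : Fp) {m : ℕ} (a : Option (Fin m × Fin 2)) :
    paley1fst' δ m (psig a) = paley1fst' δ m a := by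
  rcases a with _ | ⟨i, t⟩ <;> rfl

lemma snd_psig {Fq : Type*} [Field Fq] {m : ℕ} (y : Fin m → Fq) (a : Option (Fin m × Fin 2)) :
    paley1snd' y (psig a) = - paley1snd' y a := by
  rcases a with _ | ⟨i, t⟩
  · simp [psig, paley1snd']
  · fin_cases t <;> simp [psig, paley1snd'] <;> ring

/-- A pair is "good" if its representative sign makes the φ-difference have the
required shape. -/
def goodb {m : ℕ} : Option (Fin m × Fin 2) × Option (Fin m × Fin 2) → Bool
  | (some (_, t), _) => t == 0
  | (none, some (_, s)) => s == 1
  | (none, none) => true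

lemma goodb_flip {m : ℕ} (p : Option (Fin m × Fin 2) × Option (Fin m × Fin 2))
    (hp : p.1 ≠ p.2) : goodb (psig p.1, psig p.2) = ! goodb p := by
  rcases p with ⟨a, b⟩
  rcases a with _ | ⟨i, t⟩ <;> rcases b with _ | ⟨j, s⟩
  · exact absurd rfl hp
  · fin_cases s <;> rfl
  · fin_cases t <;> rfl
  · fin_cases t <;> rfl

lemma two_ne_zero_Fp {Fp : Type*} [Field Fp] [Fintype Fp] {m : ℕ}
    (hm : Fintype.card Fp = 2 * m + 1) : (2 : Fp) ≠ 0 := by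
  refine Ring.two_ne_zero ?_
  intro hch
  have := FiniteField.even_card_of_char_two hch
  omega

lemma exp_inj {Fp : Type*} [Field Fp] [Fintype Fp] [DecidableEq Fp] {m : ℕ}
    (hm : Fintype.card Fp = 2 * m + 1) {δ : Fp}
    (hδ : ∀ x : Fp, (x ≠ 0 ∧ IsSquare x) ↔ ∃ i : ℕ, δ ^ i = x) :
    Function.Injective (fun i : Fin m => δ ^ ((i : ℕ) + 1)) := by
  have hδ0 : δ ≠ 0 := ((hδ δ).mpr ⟨1, pow_one δ⟩).1
  have key : ∀ d : ℕ, 0 < d → d < m → δ ^ d ≠ 1 := by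
    intro d hd1 hdm h1
    have himg : (univ \ {(0 : Fp)}).image (· ^ 2) ⊆ (Finset.range d).image (δ ^ ·) := by
      intro x hx
      simp only [Finset.mem_image, Finset.mem_sdiff, Finset.mem_univ, Finset.mem_singleton,
        true_and] at hx ⊢
      obtain ⟨a, ha0, rfl⟩ := hx
      obtain ⟨n, hn⟩ := (hδ (a ^ 2)).mp ⟨pow_ne_zero _ ha0, ⟨a, sq a⟩⟩
      refine ⟨n % d, Finset.mem_range.mpr (Nat.mod_lt _ hd1), ?_⟩
      calc δ ^ (n % d) = (δ ^ d) ^ (n / d) * δ ^ (n % d) := by rw [h1, one_pow, one_mul]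
        _ = δ ^ n := by rw [← pow_mul, ← pow_add, Nat.div_add_mod]
        _ = a ^ 2 := hn
    have hcard1 : (univ \ {(0 : Fp)}).card = 2 * m := by
      rw [Finset.card_sdiff_of_subset (by simp), Finset.card_singleton, Finset.card_univ, hm]; omega
    have hfib : ∀ a ∈ (univ \ {(0 : Fp)}).image (· ^ 2),
        ((univ \ {(0 : Fp)}).filter fun x => x ^ 2 = a).card ≤ 2 := by
      intro a ha
      obtain ⟨x, hx, rfl⟩ := Finset.mem_image.mp ha
      have hsub : ((univ \ {(0 : Fp)}).filter fun z => z ^ 2 = x ^ 2) ⊆ {x, -x} := by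
        intro z hz
        have hz2 := (Finset.mem_filter.mp hz).2
        have hfac : (z - x) * (z + x) = 0 := by linear_combination hz2
        rcases mul_eq_zero.mp hfac with hcase | hcase
        · simp [Finset.mem_insert, sub_eq_zero.mp hcase]
        · simp [Finset.mem_insert, Finset.mem_singleton, eq_neg_of_add_eq_zero_left hcase]
      exact (Finset.card_le_card hsub).trans
        ((Finset.card_insert_le _ _).trans (by simp))
    have hle := Finset.card_le_mul_card_image (f := (· ^ 2)) (univ \ {(0 : Fp)}) 2 hfib
    have hle2 : ((univ \ {(0 : Fp)}).image (· ^ 2)).card ≤ d :=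
      (Finset.card_le_card himg).trans ((Finset.card_image_le).trans (by simp))
    omega
  have main : ∀ a b : ℕ, a < b → b - a < m → δ ^ a ≠ δ ^ b := by
    intro a b hab hbm hEq
    have hmul : δ ^ a * δ ^ (b - a) = δ ^ a * 1 := by
      rw [mul_one, ← pow_add, Nat.add_sub_cancel' hab.le, hEq]
    exact key (b - a) (by omega) hbm (mul_left_cancel₀ (pow_ne_zero a hδ0) hmul)
  intro i j hij
  simp only at hij
  rcases lt_trichotomy (i : ℕ) (j : ℕ) with hlt | heq | hlt
  · exact absurd hij (main _ _ (by omega) (by omega))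
  · exact Fin.ext heq
  · exact absurd hij.symm (main _ _ (by omega) (by omega))

lemma card_Q {Fp : Type*} [Field Fp] [Fintype Fp] [DecidableEq Fp] {m : ℕ}
    (hm : Fintype.card Fp = 2 * m + 1) (h : Fp) (hh : h ≠ 0) :
    ((univ.offDiag : Finset (Fp × Fp)).filter fun q => q.1 ^ 2 - q.2 ^ 2 = h).card = 2 * m := by
  have h2p : (2 : Fp) ≠ 0 := two_ne_zero_Fp hm
  have hcard : (univ.erase (0 : Fp)).card = 2 * m := by
    rw [Finset.card_erase_of_mem (Finset.mem_univ _), Finset.card_univ, hm]; omega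
  rw [← hcard]
  refine Finset.card_nbij' (fun q => q.1 - q.2)
    (fun a => ((a + h * a⁻¹) / 2, (h * a⁻¹ - a) / 2)) ?_ ?_ ?_ ?_
  · intro q hq
    simp only [Finset.mem_coe, Finset.mem_filter, Finset.mem_offDiag, Finset.mem_univ, true_and] at hq
    exact Finset.mem_erase.mpr ⟨sub_ne_zero.mpr hq.1, Finset.mem_univ _⟩
  · intro a ha
    have ha0 : a ≠ 0 := (Finset.mem_erase.mp ha).1
    have hst : (a + h * a⁻¹) / 2 - (h * a⁻¹ - a) / 2 = a := by field_simp; ring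
    refine Finset.mem_filter.mpr ⟨Finset.mem_offDiag.mpr ⟨Finset.mem_univ _, Finset.mem_univ _, ?_⟩, ?_⟩
    · intro hEq
      simp only at hEq
      exact ha0 (by rw [← hst, hEq, sub_self])
    · field_simp
      ring
  · intro q hq
    simp only [Finset.mem_coe, Finset.mem_filter, Finset.mem_offDiag, Finset.mem_univ, true_and] at hq
    obtain ⟨hne, hdiff⟩ := hq
    have ha0 : q.1 - q.2 ≠ 0 := sub_ne_zero.mpr hne
    have hsum : h * (q.1 - q.2)⁻¹ = q.1 + q.2 := by
      field_simp
      linear_combination -hdiff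
    refine Prod.ext ?_ ?_
    · show (q.1 - q.2 + h * (q.1 - q.2)⁻¹) / 2 = q.1
      rw [hsum]; field_simp; ring
    · show (h * (q.1 - q.2)⁻¹ - (q.1 - q.2)) / 2 = q.2
      rw [hsum]; field_simp; ring
  · intro a ha
    have ha0 : a ≠ 0 := (Finset.mem_erase.mp ha).1
    field_simp
    ring

lemma card_S {Fp : Type*} [Field Fp] [Fintype Fp] [DecidableEq Fp] {m : ℕ}
    (hm : Fintype.card Fp = 2 * m + 1) {δ : Fp}
    (hδ : ∀ x : Fp, (x ≠ 0 ∧ IsSquare x) ↔ ∃ i : ℕ, δ ^ i = x) (h : Fp) (hh : h ≠ 0) :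
    ((univ.offDiag : Finset (Option (Fin m × Fin 2) × Option (Fin m × Fin 2))).filter
      fun p => paley1fst' δ m p.1 - paley1fst' δ m p.2 = h).card = 2 * m := by
  have h2p : (2 : Fp) ≠ 0 := two_ne_zero_Fp hm
  have hδ0 : δ ≠ 0 := ((hδ δ).mpr ⟨1, pow_one δ⟩).1
  have hsqex : ∀ i : Fin m, ∃ r : Fp, r ^ 2 = δ ^ ((i : ℕ) + 1) := by
    intro i
    obtain ⟨-, r, hr⟩ := (hδ (δ ^ ((i : ℕ) + 1))).mpr ⟨(i : ℕ) + 1, rfl⟩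
    exact ⟨r, by rw [sq]; exact hr.symm⟩
  choose c hc using hsqex
  have hc0 : ∀ i, c i ≠ 0 := by
    intro i h0
    exact pow_ne_zero ((i : ℕ) + 1) hδ0 (by rw [← hc i, h0]; ring)
  have hg2 : ∀ a, (paley1snd' c a) ^ 2 = paley1fst' δ m a := by
    intro a
    rcases a with _ | ⟨i, t⟩
    · simp [paley1snd', paley1fst']
    · fin_cases t <;> simp [paley1snd', paley1fst', hc i] <;>
        rw [← hc i] <;> ring
  have hginj : Function.Injective (paley1snd' c) := by
    have hnz : ∀ (i : Fin m) (t : Fin 2), paley1snd' c (some (i, t)) ≠ 0 := by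
      intro i t
      fin_cases t <;> simp [paley1snd', hc0 i]
    intro a b hab
    rcases a with _ | ⟨i, t⟩ <;> rcases b with _ | ⟨j, s⟩
    · rfl
    · exact absurd hab.symm (hnz j s)
    · exact absurd hab (hnz i t)
    · have hij : i = j := by
        have h2 : paley1snd' c (some (i, t)) ^ 2 = paley1snd' c (some (j, s)) ^ 2 :=
          congrArg (· ^ 2) hab
        rw [hg2, hg2] at h2
        simp only [paley1fst'] at h2
        exact exp_inj hm hδ h2
      subst hij
      have hab' : (if ((t : ℕ) = 0) then (1 : Fp) else -1) * c i
          = (if ((s : ℕ) = 0) then (1 : Fp) else -1) * c i := hab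
      have heps := mul_right_cancel₀ (hc0 i) hab'
      have hts : t = s := by
        fin_cases t <;> fin_cases s <;> simp only [] at heps ⊢ <;> norm_num at heps ⊢
        · exact absurd (by linear_combination heps) h2p
        · exact absurd (by linear_combination -heps) h2p
      rw [hts]
  have hgbij : Function.Bijective (paley1snd' c) := by
    rw [Fintype.bijective_iff_injective_and_card]
    refine ⟨hginj, ?_⟩
    simp [hm]
    omega
  set e := Equiv.ofBijective (paley1snd' c) hgbij with he
  rw [← card_Q hm h hh]
  refine Finset.card_nbij' (fun q => (paley1snd' c q.1, paley1snd' c q.2)) (fun r => (e.symm r.1, e.symm r.2)) ?_ ?_ ?_ ?_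
  · intro q hq
    simp only [Finset.mem_coe, Finset.mem_filter, Finset.mem_offDiag, Finset.mem_univ, true_and] at hq ⊢
    exact ⟨fun hEq => hq.1 (hginj hEq), by rw [hg2, hg2]; exact hq.2⟩
  · intro r hr
    simp only [Finset.mem_coe, Finset.mem_filter, Finset.mem_offDiag, Finset.mem_univ, true_and] at hr ⊢
    have hge : ∀ x : Fp, paley1snd' c (e.symm x) = x := fun x => e.apply_symm_apply x
    refine ⟨fun hEq => hr.1 ?_, ?_⟩
    · have := congrArg (paley1snd' c) hEq
      rwa [hge, hge] at this
    · rw [← hg2, ← hg2, hge, hge]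
      exact hr.2
  · intro q hq
    have : ∀ a, e.symm (paley1snd' c a) = a := fun a => e.symm_apply_apply a
    exact Prod.ext (this q.1) (this q.2)
  · intro r hr
    exact Prod.ext (e.apply_symm_apply r.1) (e.apply_symm_apply r.2)

/-- Lemma 3.12: for `p` an odd prime power, `δ` a generator of the nonzero squares of
`F_p`, `q` an odd prime power, and arbitrary `y₁,…,y_m ∈ F_q^*` (`m = (p-1)/2`), for
each nonzero `h ∈ F_p` the multiset `T_h` is invariant under negation — it has the form
`{1,-1} · D_h` for a multiset `D_h` of size `(p-1)/2` whose entries are of the form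
`yᵢ - yⱼ`, `yᵢ + yⱼ` or `yᵢ` — and `T_h = T_{-h}`. -/
theorem paper_stmt_18 {Fp Fq : Type*} [Field Fp] [Fintype Fp] [DecidableEq Fp] [Field Fq]
    (m : ℕ) (hm : Fintype.card Fp = 2 * m + 1)
    (δ : Fp) (hδ : ∀ x : Fp, (x ≠ 0 ∧ IsSquare x) ↔ ∃ i : ℕ, δ ^ i = x)
    (h2 : (2 : Fq) ≠ 0)
    (y : Fin m → Fq) (hy : ∀ i, y i ≠ 0) :
    ∀ h : Fp, h ≠ 0 →
      (∃ Dh : Multiset Fq,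
        Tdiff (paley1fst' δ m) (paley1snd' y) h =
          (({1, -1} : Multiset Fq).bind fun c => Dh.map fun z => c * z) ∧
        Multiset.card Dh = m ∧
        ∀ z ∈ Dh, (∃ i j : Fin m, z = y i - y j ∨ z = y i + y j) ∨ ∃ i : Fin m, z = y i) ∧
      Tdiff (paley1fst' δ m) (paley1snd' y) h =
        Tdiff (paley1fst' δ m) (paley1snd' y) (-h) := by
  intro h hh
  classical
  set F := paley1fst' δ m with hF
  set Φ := paley1snd' y with hΦ
  set v : Option (Fin m × Fin 2) × Option (Fin m × Fin 2) → Fq :=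
    fun p => Φ p.1 - Φ p.2 with hv
  set S : Fp → Finset (Option (Fin m × Fin 2) × Option (Fin m × Fin 2)) :=
    fun h' => univ.offDiag.filter fun p => F p.1 - F p.2 = h' with hS
  have hT : ∀ h', Tdiff F Φ h' = ((S h').val).map v := fun _ => rfl
  have hSmem : ∀ (h' : Fp) x, x ∈ S h' ↔ x.1 ≠ x.2 ∧ F x.1 - F x.2 = h' := by
    intro h' x
    simp [hS, Finset.mem_filter, Finset.mem_offDiag]
  have hτS : ∀ (h' : Fp) x, x ∈ S h' → (psig x.1, psig x.2) ∈ S h' := by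
    intro h' x hx
    rw [hSmem] at hx ⊢
    refine ⟨fun hEq => hx.1 (psig_inj hEq), ?_⟩
    show F (psig x.1) - F (psig x.2) = h'
    rw [hF, fst_psig, fst_psig]
    exact hx.2
  constructor
  · -- the D_h decomposition
    set G := (S h).filter (fun p => goodb p = true) with hG
    set D := (G.val).map v with hD
    have hτinj : Function.Injective
        (fun p : Option (Fin m × Fin 2) × Option (Fin m × Fin 2) => (psig p.1, psig p.2)) := by
      intro p q hpq
      simp only [Prod.mk.injEq] at hpq
      exact Prod.ext (psig_inj hpq.1) (psig_inj hpq.2)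
    have hker : (S h).filter (fun p => ¬ (goodb p = true)) =
        G.map ⟨fun p => (psig p.1, psig p.2), hτinj⟩ := by
      ext x
      simp only [Finset.mem_map, Finset.mem_filter, Function.Embedding.coeFn_mk, hG]
      constructor
      · rintro ⟨hxS, hbad⟩
        have hne := ((hSmem h x).mp hxS).1
        refine ⟨(psig x.1, psig x.2), ⟨hτS h x hxS, ?_⟩, ?_⟩
        · rw [goodb_flip x hne]
          simp only [Bool.not_eq_true] at hbad
          rw [hbad]
          rfl
        · exact Prod.ext (psig_psig x.1) (psig_psig x.2)
      · rintro ⟨p, ⟨hpS, hgood⟩, rfl⟩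
        refine ⟨hτS h p hpS, ?_⟩
        rw [goodb_flip p ((hSmem h p).mp hpS).1, hgood]
        simp
    have hsplit : (S h).val = G.val + ((S h).filter (fun p => ¬ (goodb p = true))).val := by
      rw [hG, Finset.filter_val, Finset.filter_val]
      exact (Multiset.filter_add_not _ _).symm
    have hDneg : (((S h).filter (fun p => ¬ (goodb p = true))).val).map v
        = D.map (fun z => -z) := by
      rw [hker, Finset.map_val, Multiset.map_map, hD, Multiset.map_map]
      refine Multiset.map_congr rfl ?_
      intro p _
      show Φ (psig p.1) - Φ (psig p.2) = -(Φ p.1 - Φ p.2)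
      rw [hΦ, snd_psig, snd_psig]
      ring
    refine ⟨D, ?_, ?_, ?_⟩
    · rw [hT, hsplit, Multiset.map_add, hDneg]
      have : ({1, -1} : Multiset Fq).bind (fun c => D.map fun z => c * z)
          = D.map (fun z => 1 * z) + D.map (fun z => -1 * z) := by
        rw [Multiset.insert_eq_cons, Multiset.cons_bind, Multiset.singleton_bind]
      rw [this]
      congr 1
      · rw [show (fun z : Fq => 1 * z) = id from funext fun z => one_mul z, Multiset.map_id]
      · rw [show (fun z : Fq => -1 * z) = (fun z : Fq => -z) from funext fun z => neg_one_mul z]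
    · have hcS : (S h).card = 2 * m := card_S hm hδ h hh
      have hcG : (S h).card = G.card + ((S h).filter (fun p => ¬ (goodb p = true))).card := by
        rw [hG]
        exact (Finset.card_filter_add_card_filter_not _).symm
      rw [hker, Finset.card_map] at hcG
      have : Multiset.card D = G.card := by rw [hD, Multiset.card_map]; rfl
      omega
    · intro z hz
      rw [hD] at hz
      obtain ⟨p, hp, rfl⟩ := Multiset.mem_map.mp hz
      rw [Finset.mem_val, hG, Finset.mem_filter] at hp
      obtain ⟨hpS, hgood⟩ := hp
      have hne := ((hSmem h p).mp hpS).1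
      rcases p with ⟨a, b⟩
      rcases a with _ | ⟨i, t⟩ <;> rcases b with _ | ⟨j, s⟩
      · exact absurd rfl hne
      · -- (none, some (j,s)) : goodb forces s = 1, value y j
        right
        refine ⟨j, ?_⟩
        have hs : s = 1 := by
          simpa [goodb] using hgood
        subst hs
        show Φ none - Φ (some (j, 1)) = y j
        rw [hΦ]
        simp [paley1snd']
      · -- (some (i,t), none) : t = 0, value y i
        right
        refine ⟨i, ?_⟩
        have ht : t = 0 := by simpa [goodb] using hgood
        subst ht
        show Φ (some (i, 0)) - Φ none = y i
        rw [hΦ]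
        simp [paley1snd']
      · left
        refine ⟨i, j, ?_⟩
        have ht : t = 0 := by simpa [goodb] using hgood
        subst ht
        show (Φ (some (i, 0)) - Φ (some (j, s)) = y i - y j
          ∨ Φ (some (i, 0)) - Φ (some (j, s)) = y i + y j)
        rw [hΦ]
        fin_cases s
        · left; simp [paley1snd']
        · right; simp [paley1snd']
  · -- T_h = T_{-h}
    have hρinj : Function.Injective
        (fun p : Option (Fin m × Fin 2) × Option (Fin m × Fin 2) => (psig p.2, psig p.1)) := by
      intro p q hpq
      simp only [Prod.mk.injEq] at hpq
      exact Prod.ext (psig_inj hpq.2) (psig_inj hpq.1)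
    have hρ : S (-h) = (S h).map ⟨fun p => (psig p.2, psig p.1), hρinj⟩ := by
      ext x
      simp only [Finset.mem_map, Function.Embedding.coeFn_mk]
      constructor
      · intro hx
        obtain ⟨hne, hdiff⟩ := (hSmem (-h) x).mp hx
        refine ⟨(psig x.2, psig x.1), (hSmem h _).mpr ⟨?_, ?_⟩, ?_⟩
        · exact fun hEq => hne (psig_inj hEq).symm
        · show F (psig x.2) - F (psig x.1) = h
          rw [hF, fst_psig, fst_psig]
          have hdiff' : paley1fst' δ m x.1 - paley1fst' δ m x.2 = -h := hdiff
          linear_combination -hdiff'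
        · exact Prod.ext (psig_psig x.1) (psig_psig x.2)
      · rintro ⟨p, hpS, rfl⟩
        obtain ⟨hne, hdiff⟩ := (hSmem h p).mp hpS
        refine (hSmem (-h) _).mpr ⟨?_, ?_⟩
        · exact fun hEq => hne (psig_inj hEq).symm
        · show F (psig p.2) - F (psig p.1) = -h
          rw [hF, fst_psig, fst_psig]
          have hdiff' : paley1fst' δ m p.1 - paley1fst' δ m p.2 = h := hdiff
          linear_combination -hdiff'
    rw [hT, hT, hρ, Finset.map_val, Multiset.map_map]
    refine Multiset.map_congr rfl ?_
    intro p _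
    show Φ p.1 - Φ p.2 = Φ (psig p.2) - Φ (psig p.1)
    rw [hΦ, snd_psig, snd_psig]
    ring
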